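/- Let Γ = m₁⁻¹ℤ × ⋯ × m_d⁻¹ℤ ⊂ ℝ^d and f : Γ → Y be ℤ^d-periodic with ‖Δ^{k+1} f‖_Γ < ∞. Then for every 1 ≤ m ≤ k+1, ‖Δ^m f‖_Γ ≤ d^{k+1−m} ‖Δ^{k+1} f‖_Γ, where ‖Δ^j f‖_Γ = sup over x ∈ Γ and nonzero u ∈ Γ^j of ‖Δ^j_u f(x)‖/(‖u₁‖⋯‖u_j‖). -/

import Mathlib

open Finset

/-- The lattice `Γ = m₁⁻¹ℤ × ⋯ × m_d⁻¹ℤ ⊂ ℝ^d`. -/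
def lattice {d : ℕ} (m : Fin d → ℕ) : Set (Fin d → ℝ) :=
  {x | ∀ i, ∃ z : ℤ, x i = (z : ℝ) / (m i)}

/-- The finite difference of order `j`:
`Δ^j_u f (x) = ∑_{α ∈ {0,1}^j} (-1)^{j-|α|} f (x + α·u)`. -/
def fdiff {X Y : Type*} [AddCommGroup X] [AddCommGroup Y] {j : ℕ}
    (u : Fin j → X) (f : X → Y) (x : X) : Y :=
  ∑ α : Fin j → Bool,
    ((-1 : ℤ) ^ (j - (Finset.univ.filter fun i => α i).card)) •
      f (x + ∑ i, if α i then u i else 0)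

lemma lattice_zero {d : ℕ} (mm : Fin d → ℕ) : (0 : Fin d → ℝ) ∈ lattice mm :=
  fun i => ⟨0, by simp⟩

lemma lattice_add {d : ℕ} {mm : Fin d → ℕ} {x y : Fin d → ℝ}
    (hx : x ∈ lattice mm) (hy : y ∈ lattice mm) : x + y ∈ lattice mm := by
  intro i
  obtain ⟨z, hz⟩ := hx i
  obtain ⟨w, hw⟩ := hy i
  exact ⟨z + w, by simp [hz, hw, ← add_div]⟩

lemma lattice_sum {d : ℕ} {mm : Fin d → ℕ} {ι : Type*} (s : Finset ι)
    (v : ι → Fin d → ℝ) (hv : ∀ i ∈ s, v i ∈ lattice mm) :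
    ∑ i ∈ s, v i ∈ lattice mm := by
  classical
  induction s using Finset.induction with
  | empty => simpa using lattice_zero mm
  | insert _ _ hns ih =>
    rw [Finset.sum_insert hns]
    exact lattice_add (hv _ (Finset.mem_insert_self _ _))
      (ih fun i hi => hv i (Finset.mem_insert_of_mem hi))

lemma fdiff_cons {X Y : Type*} [AddCommGroup X] [AddCommGroup Y] {m : ℕ}
    (v : X) (u : Fin m → X) (f : X → Y) (x : X) :
    fdiff (Fin.cons v u) f x = fdiff u f (x + v) - fdiff u f x := by
  classical
  rw [fdiff, ← Equiv.sum_comp (Fin.consEquiv fun _ : Fin (m+1) => Bool)]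
  rw [Fintype.sum_prod_type]
  have key : ∀ (b : Bool) (β : Fin m → Bool),
      ((Fin.consEquiv fun _ : Fin (m+1) => Bool) (b, β)) = Fin.cons b β := fun _ _ => rfl
  simp only [key]
  have hcard : ∀ (b : Bool) (β : Fin m → Bool),
      (Finset.univ.filter fun i => (Fin.cons b β : Fin (m+1) → Bool) i).card
        = (if b then 1 else 0) + (Finset.univ.filter fun i => β i).card := by
    intro b β
    simp only [Finset.card_filter]
    rw [Fin.sum_univ_succ]
    simp [Fin.cons_zero, Fin.cons_succ]
  have hsum : ∀ (b : Bool) (β : Fin m → Bool),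
      (∑ i, if (Fin.cons b β : Fin (m+1) → Bool) i then Fin.cons v u i else 0)
        = (if b then v else 0) + ∑ i, if β i then u i else 0 := by
    intro b β
    rw [Fin.sum_univ_succ]
    simp [Fin.cons_zero, Fin.cons_succ]
  have hle : ∀ β : Fin m → Bool, (Finset.univ.filter fun i => β i).card ≤ m := by
    intro β; simpa using Finset.card_filter_le Finset.univ (fun i => β i = true)
  rw [Fintype.sum_bool]
  simp only [hcard, hsum, Bool.false_eq_true, if_true, if_false, zero_add]
  rw [fdiff, fdiff, ← Finset.sum_sub_distrib, ← Finset.sum_add_distrib]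
  apply Finset.sum_congr rfl
  intro β _
  set c := (Finset.univ.filter fun i => β i).card with hc
  have h1 : m + 1 - (1 + c) = m - c := by omega
  have h2 : m + 1 - c = (m - c) + 1 := by have := hle β; omega
  rw [h1, h2, pow_succ, mul_comm, neg_one_mul, neg_smul, ← add_assoc, ← sub_eq_add_neg]

lemma fdiff_periodic {d : ℕ} {Y : Type*} [AddCommGroup Y] {m : ℕ}
    (u : Fin m → Fin d → ℝ) (f : (Fin d → ℝ) → Y)
    (hper : ∀ (x : Fin d → ℝ) (h : Fin d → ℤ), f (x + fun i => (h i : ℝ)) = f x)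
    (x : Fin d → ℝ) (h : Fin d → ℤ) :
    fdiff u f (x + fun i => (h i : ℝ)) = fdiff u f x := by
  unfold fdiff
  apply Finset.sum_congr rfl
  intro α _
  congr 1
  rw [show (x + fun i => (h i : ℝ)) + ∑ i, (if α i then u i else 0)
      = (x + ∑ i, (if α i then u i else 0)) + fun i => (h i : ℝ) by abel]
  exact hper _ h

/-- Representative lattice point for `t` in the fundamental domain. -/
noncomputable def latpt {d : ℕ} (mm : Fin d → ℕ) (t : ∀ i, ZMod (mm i)) : Fin d → ℝ :=
  fun i => ((t i).val : ℝ) / mm i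

lemma latpt_mem {d : ℕ} (mm : Fin d → ℕ) (t : ∀ i, ZMod (mm i)) :
    latpt mm t ∈ lattice mm :=
  fun i => ⟨(t i).val, by simp [latpt]⟩

lemma latpt_norm {d : ℕ} (mm : Fin d → ℕ) (hmm : ∀ i, 0 < mm i) (t : ∀ i, ZMod (mm i)) :
    ∑ j, |latpt mm t j| ≤ (d : ℝ) := by
  calc ∑ j, |latpt mm t j| ≤ ∑ _j : Fin d, (1 : ℝ) := by
        apply Finset.sum_le_sum
        intro j _
        rw [latpt, abs_of_nonneg (by positivity)]
        rw [div_le_one (by exact_mod_cast hmm j)]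
        haveI : NeZero (mm j) := ⟨(hmm j).ne'⟩
        exact_mod_cast le_of_lt (ZMod.val_lt (t j))
    _ = (d : ℝ) := by simp

lemma sum_latpt_shift {d : ℕ} {Y : Type*} [AddCommGroup Y] (mm : Fin d → ℕ)
    [inst : ∀ i, NeZero (mm i)] (h : (Fin d → ℝ) → Y)
    (hper : ∀ (x : Fin d → ℝ) (hh : Fin d → ℤ), h (x + fun i => (hh i : ℝ)) = h x)
    (x : Fin d → ℝ) (hx : x ∈ lattice mm) :
    ∑ t : ∀ i, ZMod (mm i), h (x + latpt mm t) = ∑ t : ∀ i, ZMod (mm i), h (latpt mm t) := by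
  choose z hz using hx
  set w : ∀ i, ZMod (mm i) := fun i => ((z i : ℤ) : ZMod (mm i)) with hw
  have key : ∀ t : ∀ i, ZMod (mm i), h (x + latpt mm t) = h (latpt mm (t + w)) := by
    intro t
    have hdvd : ∀ i, (mm i : ℤ) ∣ (z i + ((t i).val : ℤ) - (((t i + w i).val : ℤ))) := by
      intro i
      rw [← ZMod.intCast_zmod_eq_zero_iff_dvd]
      push_cast
      rw [ZMod.natCast_val, ZMod.natCast_val, ZMod.cast_id, ZMod.cast_id]
      simp only [hw]
      ring
    set q : Fin d → ℤ := fun i => (z i + ((t i).val : ℤ) - (((t i + w i).val : ℤ))) / mm i with hq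
    have hmq : ∀ i, (mm i : ℤ) * q i = z i + ((t i).val : ℤ) - (((t i + w i).val : ℤ)) :=
      fun i => Int.mul_ediv_cancel' (hdvd i)
    have hxe : x + latpt mm t = latpt mm (t + w) + fun i => ((q i : ℝ)) := by
      funext i
      have hm0 : (mm i : ℝ) ≠ 0 := by
        exact_mod_cast (Nat.pos_of_ne_zero (inst i).out).ne'
      have h2 := congrArg (fun r : ℤ => (r : ℝ)) (hmq i)
      push_cast at h2
      show x i + latpt mm t i = latpt mm (t + w) i + (q i : ℝ)
      simp only [latpt, Pi.add_apply]
      rw [hz i, ← add_div,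
        show (q i : ℝ) = ((mm i : ℝ) * q i) / mm i by field_simp,
        ← add_div, h2]
      ring_nf
    rw [hxe, hper _ q]
  rw [Finset.sum_congr rfl (fun t _ => key t)]
  exact Fintype.sum_equiv (Equiv.addRight w) _ _ (fun t => rfl)

lemma sum_fdiff_zero {d : ℕ} {Y : Type*} [AddCommGroup Y] (mm : Fin d → ℕ)
    [inst : ∀ i, NeZero (mm i)] {m : ℕ} (u : Fin (m + 1) → Fin d → ℝ)
    (hu : ∀ i, u i ∈ lattice mm) (f : (Fin d → ℝ) → Y)
    (hper : ∀ (x : Fin d → ℝ) (h : Fin d → ℤ), f (x + fun i => (h i : ℝ)) = f x) :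
    ∑ t : ∀ i, ZMod (mm i), fdiff u f (latpt mm t) = 0 := by
  have hu' : u = Fin.cons (u 0) (Fin.tail u) := (Fin.cons_self_tail u).symm
  rw [hu']
  have hp := fdiff_periodic (Fin.tail u) f hper
  calc ∑ t : ∀ i, ZMod (mm i), fdiff (Fin.cons (u 0) (Fin.tail u)) f (latpt mm t)
      = ∑ t : ∀ i, ZMod (mm i),
          (fdiff (Fin.tail u) f (u 0 + latpt mm t) - fdiff (Fin.tail u) f (latpt mm t)) := by
        apply Finset.sum_congr rfl
        intro t _
        rw [fdiff_cons]
        congr 2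
        abel
    _ = 0 := by
        rw [Finset.sum_sub_distrib,
          sum_latpt_shift mm (fdiff (Fin.tail u) f) hp (u 0) (hu 0), sub_self]

lemma step_lemma {d : ℕ} {Y : Type*} [NormedAddCommGroup Y] [NormedSpace ℝ Y]
    (mm : Fin d → ℕ) [inst : ∀ i, NeZero (mm i)] (f : (Fin d → ℝ) → Y)
    (hper : ∀ (x : Fin d → ℝ) (h : Fin d → ℤ), f (x + fun i => (h i : ℝ)) = f x)
    (B : ℝ) (hB : 0 ≤ B) {m : ℕ}
    (hstep : ∀ (v : Fin (m + 1 + 1) → Fin d → ℝ), (∀ i, v i ∈ lattice mm) →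
      ∀ x ∈ lattice mm, ‖fdiff v f x‖ ≤ B * ∏ i, ∑ j, |v i j|)
    (u : Fin (m + 1) → Fin d → ℝ) (hu : ∀ i, u i ∈ lattice mm)
    (x : Fin d → ℝ) (hx : x ∈ lattice mm) :
    ‖fdiff u f x‖ ≤ (d : ℝ) * B * ∏ i, ∑ j, |u i j| := by
  have hmm : ∀ i, 0 < mm i := fun i => Nat.pos_of_ne_zero (inst i).out
  set g : (Fin d → ℝ) → Y := fdiff u f with hg
  have hgper := fdiff_periodic u f hper
  set N := Fintype.card (∀ i, ZMod (mm i)) with hN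
  have hN0 : 0 < N := Fintype.card_pos
  have hsum0 : ∑ t : ∀ i, ZMod (mm i), g (latpt mm t) = 0 :=
    sum_fdiff_zero mm u hu f hper
  have hshift : ∑ t : ∀ i, ZMod (mm i), g (x + latpt mm t) = 0 := by
    rw [sum_latpt_shift mm g hgper x hx, hsum0]
  have key : N • g x = ∑ t : ∀ i, ZMod (mm i), (g x - g (x + latpt mm t)) := by
    rw [Finset.sum_sub_distrib, hshift, sub_zero, Finset.sum_const, Finset.card_univ]
  have hterm : ∀ t : ∀ i, ZMod (mm i),
      ‖g x - g (x + latpt mm t)‖ ≤ B * ((d : ℝ) * ∏ i, ∑ j, |u i j|) := by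
    intro t
    have he : g x - g (x + latpt mm t) = -(fdiff (Fin.cons (latpt mm t) u) f x) := by
      rw [fdiff_cons, hg, neg_sub]
    rw [he, norm_neg]
    have hbd := hstep (Fin.cons (latpt mm t) u)
      (fun i => Fin.cases (latpt_mem mm t) hu i) x hx
    refine hbd.trans ?_
    rw [Fin.prod_univ_succ]
    simp only [Fin.cons_zero, Fin.cons_succ]
    rw [← mul_assoc, ← mul_assoc]
    exact mul_le_mul_of_nonneg_right
      (mul_le_mul_of_nonneg_left (latpt_norm mm hmm t) hB)
      (Finset.prod_nonneg fun i _ => Finset.sum_nonneg fun j _ => abs_nonneg _)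
  have hnorm : (N : ℝ) * ‖g x‖ ≤ (N : ℝ) * ((d : ℝ) * B * ∏ i, ∑ j, |u i j|) := by
    have h1 : ‖N • g x‖ = (N : ℝ) * ‖g x‖ := by
      rw [← Nat.cast_smul_eq_nsmul ℝ, norm_smul, Real.norm_natCast]
    calc (N : ℝ) * ‖g x‖ = ‖N • g x‖ := h1.symm
      _ ≤ ∑ _t : ∀ i, ZMod (mm i), (B * ((d : ℝ) * ∏ i, ∑ j, |u i j|)) := by
          rw [key]
          exact (norm_sum_le _ _).trans (Finset.sum_le_sum fun t _ => hterm t)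
      _ = (N : ℝ) * ((d : ℝ) * B * ∏ i, ∑ j, |u i j|) := by
          rw [Finset.sum_const, Finset.card_univ, nsmul_eq_mul]
          ring
  exact le_of_mul_le_mul_left hnorm (by exact_mod_cast hN0)


/-- For a ℤ^d-periodic lattice function, `‖Δ^m f‖_Γ ≤ d^{k+1-m} ‖Δ^{k+1} f‖_Γ`
(sum norm on ℝ^d). -/
theorem lower_order_differences_bound {d : ℕ} {Y : Type*}
    [NormedAddCommGroup Y] [NormedSpace ℝ Y] [CompleteSpace Y]
    (mm : Fin d → ℕ) (hmm : ∀ i, 0 < mm i) (f : (Fin d → ℝ) → Y)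
    (hper : ∀ (x : Fin d → ℝ) (h : Fin d → ℤ), f (x + fun i => (h i : ℝ)) = f x)
    (k : ℕ) (C : ℝ) (hC0 : 0 ≤ C)
    (hC : ∀ (u : Fin (k + 1) → Fin d → ℝ), (∀ i, u i ∈ lattice mm) →
      ∀ x ∈ lattice mm, ‖fdiff u f x‖ ≤ C * ∏ i, ∑ j, |u i j|)
    (m : ℕ) (hm1 : 1 ≤ m) (hm2 : m ≤ k + 1) :
    ∀ (u : Fin m → Fin d → ℝ), (∀ i, u i ∈ lattice mm) →
      ∀ x ∈ lattice mm,
        ‖fdiff u f x‖ ≤ (d : ℝ) ^ (k + 1 - m) * C * ∏ i, ∑ j, |u i j| := by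
  haveI : ∀ i, NeZero (mm i) := fun i => ⟨(hmm i).ne'⟩
  have main : ∀ n m' : ℕ, m' = k + 1 - n → 1 ≤ m' →
      ∀ (u : Fin m' → Fin d → ℝ), (∀ i, u i ∈ lattice mm) →
      ∀ x ∈ lattice mm,
        ‖fdiff u f x‖ ≤ (d : ℝ) ^ n * C * ∏ i, ∑ j, |u i j| := by
    intro n
    induction n with
    | zero =>
      intro m' hm' _ u hu x hx
      have : m' = k + 1 := by omega
      subst this
      rw [pow_zero, one_mul]
      exact hC u hu x hx
    | succ n ih =>
      intro m' hm' h1 u hu x hx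
      have hn : n + 1 ≤ k := by omega
      obtain ⟨M, rfl⟩ : ∃ M, m' = M + 1 :=
        ⟨m' - 1, by omega⟩
      have hstep : ∀ (v : Fin (M + 1 + 1) → Fin d → ℝ), (∀ i, v i ∈ lattice mm) →
          ∀ x ∈ lattice mm, ‖fdiff v f x‖ ≤ ((d : ℝ) ^ n * C) * ∏ i, ∑ j, |v i j| :=
        ih (M + 1 + 1) (by omega) (by omega)
      have hB : (0 : ℝ) ≤ (d : ℝ) ^ n * C := by positivity
      have := step_lemma mm f hper ((d : ℝ) ^ n * C) hB hstep u hu x hx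
      calc ‖fdiff u f x‖ ≤ (d : ℝ) * ((d : ℝ) ^ n * C) * ∏ i, ∑ j, |u i j| := this
        _ = (d : ℝ) ^ (n + 1) * C * ∏ i, ∑ j, |u i j| := by ring
  exact main (k + 1 - m) m (by omega) hm1
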